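/- (Theorem 2) Let x_1,…,x_n ∈ X be fixed instances, p^n_x the uniform distribution over {x_1,…,x_n}, and V = {p Borel probability distribution on X×Y : |E_p{Φ} − τ| ⪯ λ and the instances' marginal of p equals p^n_x}. Assume V is nonempty. If μ* is a minimizer of min_{μ ∈ ℝ^m} 1 − τᵀμ + (1/n)∑_{i=1}^n φ(μ,x_i) + λᵀ|μ|, and h^V is the classification rule h^V(y|x) = max(Φ(x,y)ᵀμ* − φ(μ*,x), 0) for all x ∈ X and y ∈ Y, then h^V is a 0-1 minimax risk classifier for V, i.e., sup_{p ∈ V} ℓ(h^V,p) = inf_{h ∈ T(X,Y)} sup_{p ∈ V} ℓ(h,p). -/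

import Mathlib

open MeasureTheory
open scoped ENNReal

noncomputable section

/-- A (randomized) classification rule. -/
def IsRule {d K : ℕ} (Xs : Set (Fin d → ℝ)) (h : ↥Xs → Fin K → ℝ) : Prop :=
  (∀ x y, 0 ≤ h x y) ∧ (∀ x, ∑ y, h x y = 1) ∧ ∀ y, Measurable fun x => h x y

/-- Expected 0-1 loss. -/
def loss {d K : ℕ} {Xs : Set (Fin d → ℝ)} (h : ↥Xs → Fin K → ℝ)
    (p : Measure (↥Xs × Fin K)) : ℝ :=
  ∫ z, (1 - h z.1 z.2) ∂p

/-- `φ(μ,x) = max_{∅ ≠ C ⊆ Y} ((∑_{y∈C} Φ(x,y)ᵀμ) - 1)/|C|`. -/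
def phix {d K m : ℕ} {Xs : Set (Fin d → ℝ)} (Φ : ↥Xs × Fin K → Fin m → ℝ)
    (μ : Fin m → ℝ) (x : ↥Xs) : ℝ :=
  ⨆ C : {C : Finset (Fin K) // C.Nonempty},
    ((∑ y ∈ C.1, ∑ i, Φ (x, y) i * μ i) - 1) / (C.1.card : ℝ)

/-- Uncertainty set with fixed instances' marginal equal to the uniform (empirical)
distribution over the instances `xi 0, …, xi (n-1)`. -/
def UncV {d K m n : ℕ} {Xs : Set (Fin d → ℝ)} (Φ : ↥Xs × Fin K → Fin m → ℝ)
    (τ lam : Fin m → ℝ) (xi : Fin n → ↥Xs) : Set (Measure (↥Xs × Fin K)) :=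
  {p | IsProbabilityMeasure p ∧ (∀ i, |(∫ z, Φ z i ∂p) - τ i| ≤ lam i) ∧
    p.map Prod.fst = (n : ℝ≥0∞)⁻¹ • ∑ j : Fin n, Measure.dirac (xi j)}

lemma mrc_le_ciSup' {ι : Type*} [Finite ι] (f : ι → ℝ) (i : ι) : f i ≤ ⨆ j, f j :=
  le_ciSup (Set.Finite.bddAbove (Set.finite_range f)) i

lemma mrc_exists_eq_ciSup' {ι : Type*} [Finite ι] [Nonempty ι] (f : ι → ℝ) :
    ∃ i, (⨆ j, f j) = f i := by
  obtain ⟨i, hi⟩ := Finite.exists_max f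
  exact ⟨i, le_antisymm (ciSup_le hi) (mrc_le_ciSup' f i)⟩

/-- sign from a Boolean -/
def mrcsg (b : Bool) : ℝ := if b then 1 else -1

lemma mrc_sg_le (b : Bool) (t : ℝ) : mrcsg b * t ≤ |t| := by
  cases b <;> simp [mrcsg] <;> [exact neg_le_abs t; exact le_abs_self t]

lemma mrc_sg_abs (b : Bool) : |mrcsg b| = 1 := by cases b <;> simp [mrcsg]

lemma mrc_sg_eq (t : ℝ) : ∃ b, mrcsg b * t = |t| := by
  by_cases h : 0 ≤ t
  · exact ⟨true, by simp [mrcsg, abs_of_nonneg h]⟩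
  · exact ⟨false, by simp [mrcsg, abs_of_neg (lt_of_not_ge h)]⟩


/-- Water-filling: the positive parts sum to 1. -/
lemma mrc_waterfill {K : ℕ} (hK : 0 < K) (a : Fin K → ℝ) :
    ∑ y, max (a y - ⨆ C : {C : Finset (Fin K) // C.Nonempty},
      ((∑ y ∈ C.1, a y) - 1) / (C.1.card : ℝ)) 0 = 1 := by
  classical
  haveI : Nonempty {C : Finset (Fin K) // C.Nonempty} :=
    ⟨⟨{⟨0, hK⟩}, Finset.singleton_nonempty _⟩⟩
  set φ := ⨆ C : {C : Finset (Fin K) // C.Nonempty},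
      ((∑ y ∈ C.1, a y) - 1) / (C.1.card : ℝ) with hφdef
  have hle : ∀ C : Finset (Fin K), C.Nonempty → ((∑ y ∈ C, a y) - 1) / (C.card : ℝ) ≤ φ :=
    fun C hC => mrc_le_ciSup' (fun C : {C : Finset (Fin K) // C.Nonempty} =>
      ((∑ y ∈ C.1, a y) - 1) / (C.1.card : ℝ)) ⟨C, hC⟩
  obtain ⟨C0, hC0⟩ := mrc_exists_eq_ciSup' (fun C : {C : Finset (Fin K) // C.Nonempty} =>
      ((∑ y ∈ C.1, a y) - 1) / (C.1.card : ℝ))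
  rw [← hφdef] at hC0
  have hc0pos : (0:ℝ) < (C0.1.card : ℝ) := by exact_mod_cast C0.2.card_pos
  have hsumC0 : ∑ y ∈ C0.1, a y = (C0.1.card : ℝ) * φ + 1 := by
    field_simp at hC0
    linarith [hC0]
  -- every member of C0 has a y ≥ φ
  have hmem : ∀ y ∈ C0.1, φ ≤ a y := by
    intro y hy
    by_cases h1 : C0.1.card = 1
    · obtain ⟨z, hz⟩ := Finset.card_eq_one.mp h1
      have hyz : y = z := by rw [hz] at hy; simpa using hy
      rw [hz] at hsumC0
      simp at hsumC0
      subst hyz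
      linarith
    · have h2 : 2 ≤ C0.1.card := by
        have := C0.2.card_pos
        omega
      have hne : (C0.1.erase y).Nonempty := by
        rw [← Finset.card_pos, Finset.card_erase_of_mem hy]
        omega
      have h3 := hle _ hne
      have hcard : ((C0.1.erase y).card : ℝ) = (C0.1.card : ℝ) - 1 := by
        rw [Finset.card_erase_of_mem hy]
        have := C0.2.card_pos
        push_cast [Nat.cast_sub (by omega : 1 ≤ C0.1.card)]
        ring
      have hsum : ∑ z ∈ C0.1.erase y, a z = ∑ z ∈ C0.1, a z - a y := by
        rw [← Finset.sum_erase_add C0.1 a hy]; ring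
      rw [hsum, hcard, hsumC0] at h3
      have hpos : (0:ℝ) < (C0.1.card : ℝ) - 1 := by
        have : (2:ℝ) ≤ (C0.1.card : ℝ) := by exact_mod_cast h2
        linarith
      rw [div_le_iff₀ hpos] at h3
      nlinarith
  have hge : 1 ≤ ∑ y, max (a y - φ) 0 := by
    have h1 : ∑ y ∈ C0.1, max (a y - φ) 0 ≤ ∑ y, max (a y - φ) 0 :=
      Finset.sum_le_sum_of_subset_of_nonneg (Finset.subset_univ _)
        (fun y _ _ => le_max_right _ _)
    have h2 : ∑ y ∈ C0.1, max (a y - φ) 0 = ∑ y ∈ C0.1, (a y - φ) :=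
      Finset.sum_congr rfl (fun y hy => max_eq_left (by linarith [hmem y hy]))
    rw [h2, Finset.sum_sub_distrib, Finset.sum_const, hsumC0] at h1
    simp only [nsmul_eq_mul] at h1
    linarith
  have hle1 : ∑ y, max (a y - φ) 0 ≤ 1 := by
    set Cp : Finset (Fin K) := Finset.univ.filter (fun y => φ < a y) with hCp
    have hsplit : ∑ y, max (a y - φ) 0 = ∑ y ∈ Cp, (a y - φ) := by
      rw [← Finset.sum_subset (Finset.subset_univ Cp)]
      · exact Finset.sum_congr rfl (fun y hy => by
          have : φ < a y := (Finset.mem_filter.mp hy).2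
          exact max_eq_left (by linarith))
      · intro y _ hy
        have : ¬ φ < a y := fun h => hy (Finset.mem_filter.mpr ⟨Finset.mem_univ _, h⟩)
        exact max_eq_right (by linarith [not_lt.mp this])
    rw [hsplit]
    rcases Finset.eq_empty_or_nonempty Cp with he | hne
    · simp [he]
    · have h3 := hle Cp hne
      have hcpos : (0:ℝ) < (Cp.card : ℝ) := by exact_mod_cast hne.card_pos
      rw [div_le_iff₀ hcpos] at h3
      have hφle : ∀ y ∈ Cp, φ ≤ a y := fun y hy => le_of_lt (Finset.mem_filter.mp hy).2
      rw [Finset.sum_sub_distrib, Finset.sum_const]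
      simp only [nsmul_eq_mul]
      nlinarith
  linarith


lemma mrc_phix_meas {d K m : ℕ} {Xs : Set (Fin d → ℝ)} (Φ : ↥Xs × Fin K → Fin m → ℝ)
    (hΦmeas : ∀ i, Measurable fun z => Φ z i) (μ : Fin m → ℝ) :
    Measurable (phix Φ μ) := by
  apply Measurable.iSup
  intro C
  apply Measurable.div_const
  apply Measurable.sub_const
  apply Finset.measurable_sum
  intro y _
  apply Finset.measurable_sum
  intro i _
  exact ((hΦmeas i).comp (measurable_prodMk_right)).mul_const _

lemma mrc_phix_bound {d K m : ℕ} {Xs : Set (Fin d → ℝ)} (hK : 0 < K)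
    (Φ : ↥Xs × Fin K → Fin m → ℝ) (B : ℝ) (hΦbdd : ∀ z i, |Φ z i| ≤ B)
    (μ : Fin m → ℝ) (x : ↥Xs) :
    |phix Φ μ x| ≤ K * (∑ i, B * |μ i|) + 1 := by
  classical
  haveI : Nonempty {C : Finset (Fin K) // C.Nonempty} :=
    ⟨⟨{⟨0, hK⟩}, Finset.singleton_nonempty _⟩⟩
  set A := ∑ i, B * |μ i| with hA
  have habs : ∀ y : Fin K, |∑ i, Φ (x, y) i * μ i| ≤ A := by
    intro y
    calc |∑ i, Φ (x, y) i * μ i| ≤ ∑ i, |Φ (x, y) i * μ i| := Finset.abs_sum_le_sum_abs _ _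
    _ ≤ A := Finset.sum_le_sum (fun i _ => by
        rw [abs_mul]
        exact mul_le_mul_of_nonneg_right (hΦbdd _ i) (abs_nonneg _))
  have hA0 : 0 ≤ A := le_trans (abs_nonneg _) (habs ⟨0, hK⟩)
  have hKA : A ≤ K * A := le_mul_of_one_le_left hA0 (by exact_mod_cast hK)
  have hphix : phix Φ μ x = ⨆ C : {C : Finset (Fin K) // C.Nonempty},
      ((∑ y ∈ C.1, ∑ i, Φ (x, y) i * μ i) - 1) / (C.1.card : ℝ) := rfl
  rw [hphix, abs_le]
  constructor
  · have h1 : -(↑K * A + 1) ≤ ((∑ y ∈ ({⟨0, hK⟩} : Finset (Fin K)), ∑ i, Φ (x, y) i * μ i) - 1)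
        / ((({⟨0, hK⟩} : Finset (Fin K))).card : ℝ) := by
      simp only [Finset.sum_singleton, Finset.card_singleton, Nat.cast_one, div_one]
      have := habs ⟨0, hK⟩
      rw [abs_le] at this
      linarith
    refine le_trans h1 ?_
    have := mrc_le_ciSup' (fun C : {C : Finset (Fin K) // C.Nonempty} =>
      ((∑ y ∈ C.1, ∑ i, Φ (x, y) i * μ i) - 1) / (C.1.card : ℝ))
      (⟨{⟨0, hK⟩}, Finset.singleton_nonempty _⟩ : {C : Finset (Fin K) // C.Nonempty})
    simpa using this
  · apply ciSup_le
    intro C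
    have hc1 : (1:ℝ) ≤ (C.1.card : ℝ) := by exact_mod_cast C.2.card_pos
    have hS : |∑ y ∈ C.1, ∑ i, Φ (x, y) i * μ i| ≤ K * A := by
      calc |∑ y ∈ C.1, ∑ i, Φ (x, y) i * μ i| ≤ ∑ y ∈ C.1, |∑ i, Φ (x, y) i * μ i| :=
            Finset.abs_sum_le_sum_abs _ _
      _ ≤ ∑ y ∈ C.1, A := Finset.sum_le_sum (fun y _ => habs y)
      _ = C.1.card * A := by rw [Finset.sum_const, nsmul_eq_mul]
      _ ≤ K * A := by
          apply mul_le_mul_of_nonneg_right _ hA0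
          exact_mod_cast Finset.card_le_card (Finset.subset_univ C.1) |>.trans
            (le_of_eq (Finset.card_univ.trans (Fintype.card_fin K)))
    calc ((∑ y ∈ C.1, ∑ i, Φ (x, y) i * μ i) - 1) / (C.1.card : ℝ)
        ≤ |((∑ y ∈ C.1, ∑ i, Φ (x, y) i * μ i) - 1) / (C.1.card : ℝ)| := le_abs_self _
      _ = |(∑ y ∈ C.1, ∑ i, Φ (x, y) i * μ i) - 1| / (C.1.card : ℝ) := by
          rw [abs_div, abs_of_nonneg (by linarith : (0:ℝ) ≤ (C.1.card : ℝ))]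
      _ ≤ |(∑ y ∈ C.1, ∑ i, Φ (x, y) i * μ i) - 1| := by
          apply div_le_self (abs_nonneg _) hc1
      _ ≤ |∑ y ∈ C.1, ∑ i, Φ (x, y) i * μ i| + 1 := by
          calc _ ≤ |∑ y ∈ C.1, ∑ i, Φ (x, y) i * μ i| + |(1:ℝ)| := abs_sub _ _
          _ = _ := by norm_num
      _ ≤ K * A + 1 := by linarith

section Integration
variable {α : Type*} [MeasurableSpace α] [MeasurableSingletonClass α]

lemma mrc_integrable_dirac (f : α → ℝ) (a : α) : Integrable f (Measure.dirac a) :=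
  (integrable_congr (ae_eq_dirac f)).mpr (integrable_const _)

lemma mrc_integral_combo {ι : Type*} [Fintype ι]
    (c : ι → ℝ) (hc : ∀ i, 0 ≤ c i) (pt : ι → α) (f : α → ℝ) :
    ∫ x, f x ∂(∑ i, (ENNReal.ofReal (c i)) • Measure.dirac (pt i)) = ∑ i, c i * f (pt i) := by
  rw [integral_finset_sum_measure
    (fun i _ => (mrc_integrable_dirac f (pt i)).smul_measure ENNReal.ofReal_ne_top)]
  refine Finset.sum_congr rfl (fun i _ => ?_)
  rw [integral_smul_measure, integral_dirac, ENNReal.toReal_ofReal (hc i), smul_eq_mul]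

lemma mrc_integral_marg {n : ℕ} (pt : Fin n → α) (f : α → ℝ) :
    ∫ x, f x ∂((n : ℝ≥0∞)⁻¹ • ∑ j, Measure.dirac (pt j)) = (∑ j, f (pt j)) / n := by
  rw [integral_smul_measure, integral_finset_sum_measure (fun j _ => mrc_integrable_dirac f _)]
  simp only [integral_dirac]
  rw [ENNReal.toReal_inv, ENNReal.toReal_natCast, smul_eq_mul, div_eq_inv_mul]

lemma mrc_integrable_of_bounded {p : Measure α} [IsFiniteMeasure p]
    {f : α → ℝ} (hf : Measurable f) {C : ℝ} (hC : ∀ x, |f x| ≤ C) : Integrable f p :=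
  ⟨hf.aestronglyMeasurable, HasFiniteIntegral.of_bounded (C := C)
    (Filter.Eventually.of_forall (by simpa [Real.norm_eq_abs] using hC))⟩

end Integration

section LP

variable {d K m n : ℕ} {Xs : Set (Fin d → ℝ)}

/-- index of affine pieces -/
abbrev mrcS (K n m : ℕ) : Type :=
  (Fin n → {C : Finset (Fin K) // C.Nonempty}) × (Fin m → Bool)

lemma mrc_S_nonempty (hK : 0 < K) : Nonempty (mrcS K n m) := by
  have : Nonempty {C : Finset (Fin K) // C.Nonempty} :=
    ⟨⟨{⟨0, hK⟩}, Finset.singleton_nonempty _⟩⟩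
  infer_instance

/-- gradient vector of an affine piece -/
def mrcbv (Φ : ↥Xs × Fin K → Fin m → ℝ) (τ lam : Fin m → ℝ) (xi : Fin n → ↥Xs)
    (s : mrcS K n m) (i : Fin m) : ℝ :=
  -τ i + (∑ j, (∑ y ∈ (s.1 j).1, Φ (xi j, y) i) / ((s.1 j).1.card : ℝ)) / n
    + lam i * mrcsg (s.2 i)

/-- affine piece -/
def mrcLL (Φ : ↥Xs × Fin K → Fin m → ℝ) (τ lam : Fin m → ℝ) (xi : Fin n → ↥Xs)
    (s : mrcS K n m) (μ : Fin m → ℝ) : ℝ :=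
  1 - (∑ i, τ i * μ i)
    + (∑ j, ((∑ y ∈ (s.1 j).1, ∑ i, Φ (xi j, y) i * μ i) - 1) / ((s.1 j).1.card : ℝ)) / n
    + ∑ i, lam i * (mrcsg (s.2 i) * μ i)

/-- the dual objective -/
def mrcg (Φ : ↥Xs × Fin K → Fin m → ℝ) (τ lam : Fin m → ℝ) (xi : Fin n → ↥Xs)
    (μ : Fin m → ℝ) : ℝ :=
  1 - (∑ i, τ i * μ i) + (∑ j, phix Φ μ (xi j)) / n + ∑ i, lam i * |μ i|

variable (Φ : ↥Xs × Fin K → Fin m → ℝ) (τ lam : Fin m → ℝ) (xi : Fin n → ↥Xs)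

lemma mrc_term_le_phix (μ : Fin m → ℝ) (x : ↥Xs) (C : {C : Finset (Fin K) // C.Nonempty}) :
    ((∑ y ∈ C.1, ∑ i, Φ (x, y) i * μ i) - 1) / (C.1.card : ℝ) ≤ phix Φ μ x := by
  have h : phix Φ μ x = ⨆ C : {C : Finset (Fin K) // C.Nonempty},
      ((∑ y ∈ C.1, ∑ i, Φ (x, y) i * μ i) - 1) / (C.1.card : ℝ) := rfl
  rw [h]
  exact mrc_le_ciSup' (fun C : {C : Finset (Fin K) // C.Nonempty} =>
    ((∑ y ∈ C.1, ∑ i, Φ (x, y) i * μ i) - 1) / (C.1.card : ℝ)) C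

lemma mrc_phix_attained (hK : 0 < K) (μ : Fin m → ℝ) (x : ↥Xs) :
    ∃ C : {C : Finset (Fin K) // C.Nonempty},
      phix Φ μ x = ((∑ y ∈ C.1, ∑ i, Φ (x, y) i * μ i) - 1) / (C.1.card : ℝ) := by
  haveI : Nonempty {C : Finset (Fin K) // C.Nonempty} :=
    ⟨⟨{⟨0, hK⟩}, Finset.singleton_nonempty _⟩⟩
  exact mrc_exists_eq_ciSup' _

/-- Each piece is affine with gradient `mrcbv`. -/
lemma mrc_LL_affine (s : mrcS K n m) (μ : Fin m → ℝ) :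
    mrcLL Φ τ lam xi s μ
      = (1 - (∑ j, 1 / (((s.1 j).1.card : ℝ))) / n) + ∑ i, mrcbv Φ τ lam xi s i * μ i := by
  unfold mrcLL mrcbv
  have h1 : ∑ i, (-τ i + (∑ j, (∑ y ∈ (s.1 j).1, Φ (xi j, y) i) / ((s.1 j).1.card : ℝ)) / n
        + lam i * mrcsg (s.2 i)) * μ i
      = ∑ i, (-(τ i * μ i)
          + ((∑ j, (∑ y ∈ (s.1 j).1, Φ (xi j, y) i) / ((s.1 j).1.card : ℝ)) * μ i) / n
          + lam i * (mrcsg (s.2 i) * μ i)) :=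
    Finset.sum_congr rfl (fun i _ => by ring)
  have h2 : ∑ i, (∑ j, (∑ y ∈ (s.1 j).1, Φ (xi j, y) i) / ((s.1 j).1.card : ℝ)) * μ i
      = ∑ j, ((∑ y ∈ (s.1 j).1, ∑ i, Φ (xi j, y) i * μ i)) / ((s.1 j).1.card : ℝ) := by
    calc ∑ i, (∑ j, (∑ y ∈ (s.1 j).1, Φ (xi j, y) i) / ((s.1 j).1.card : ℝ)) * μ i
        = ∑ i, ∑ j, (∑ y ∈ (s.1 j).1, Φ (xi j, y) i) / ((s.1 j).1.card : ℝ) * μ i :=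
          Finset.sum_congr rfl (fun i _ => Finset.sum_mul _ _ _)
      _ = ∑ j, ∑ i, (∑ y ∈ (s.1 j).1, Φ (xi j, y) i) / ((s.1 j).1.card : ℝ) * μ i :=
          Finset.sum_comm
      _ = ∑ j, ((∑ y ∈ (s.1 j).1, ∑ i, Φ (xi j, y) i * μ i)) / ((s.1 j).1.card : ℝ) := by
          refine Finset.sum_congr rfl (fun j _ => ?_)
          calc ∑ i, (∑ y ∈ (s.1 j).1, Φ (xi j, y) i) / ((s.1 j).1.card : ℝ) * μ i
              = ∑ i, (∑ y ∈ (s.1 j).1, Φ (xi j, y) i * μ i) / ((s.1 j).1.card : ℝ) := by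
                refine Finset.sum_congr rfl (fun i _ => ?_)
                rw [div_mul_eq_mul_div, Finset.sum_mul]
            _ = ∑ y ∈ (s.1 j).1, (∑ i, Φ (xi j, y) i * μ i) / ((s.1 j).1.card : ℝ) := by
                rw [← Finset.sum_div, ← Finset.sum_div, Finset.sum_comm]
            _ = (∑ y ∈ (s.1 j).1, ∑ i, Φ (xi j, y) i * μ i) / ((s.1 j).1.card : ℝ) := by
                rw [Finset.sum_div]
  have h3 : ∑ j, ((∑ y ∈ (s.1 j).1, ∑ i, Φ (xi j, y) i * μ i) - 1) / ((s.1 j).1.card : ℝ)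
      = ∑ j, (∑ y ∈ (s.1 j).1, ∑ i, Φ (xi j, y) i * μ i) / ((s.1 j).1.card : ℝ)
        - ∑ j, 1 / ((s.1 j).1.card : ℝ) := by
    rw [← Finset.sum_sub_distrib]
    exact Finset.sum_congr rfl (fun j _ => sub_div _ _ _)
  rw [h1, Finset.sum_add_distrib, Finset.sum_add_distrib, Finset.sum_neg_distrib,
    ← Finset.sum_div, h2, h3, sub_div]
  ring

/-- Every affine piece is below the dual objective. -/
lemma mrc_LL_le_g (hn : 0 < n) (hlam : ∀ i, 0 ≤ lam i) (s : mrcS K n m) (μ : Fin m → ℝ) :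
    mrcLL Φ τ lam xi s μ ≤ mrcg Φ τ lam xi μ := by
  unfold mrcLL mrcg
  have hs1 : (∑ j, ((∑ y ∈ (s.1 j).1, ∑ i, Φ (xi j, y) i * μ i) - 1) / ((s.1 j).1.card : ℝ)) / n
      ≤ (∑ j, phix Φ μ (xi j)) / n := by
    rw [div_eq_mul_inv, div_eq_mul_inv]
    apply mul_le_mul_of_nonneg_right _ (by positivity)
    exact Finset.sum_le_sum (fun j _ => mrc_term_le_phix Φ μ (xi j) (s.1 j))
  have hs2 : ∑ i, lam i * (mrcsg (s.2 i) * μ i) ≤ ∑ i, lam i * |μ i| :=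
    Finset.sum_le_sum (fun i _ => mul_le_mul_of_nonneg_left (mrc_sg_le _ _) (hlam i))
  linarith

/-- At every point some affine piece attains the dual objective. -/
lemma mrc_exists_LL_eq (hK : 0 < K) (μ : Fin m → ℝ) :
    ∃ s : mrcS K n m, mrcLL Φ τ lam xi s μ = mrcg Φ τ lam xi μ := by
  choose Cf hCf using fun j : Fin n => mrc_phix_attained Φ hK μ (xi j)
  choose bf hbf using fun i : Fin m => mrc_sg_eq (μ i)
  refine ⟨(Cf, bf), ?_⟩
  unfold mrcLL mrcg
  simp only
  have e1 : ∑ j, ((∑ y ∈ (Cf j).1, ∑ i, Φ (xi j, y) i * μ i) - 1) / (((Cf j).1.card : ℝ))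
      = ∑ j, phix Φ μ (xi j) := Finset.sum_congr rfl (fun j _ => (hCf j).symm)
  have e2 : ∑ i, lam i * (mrcsg (bf i) * μ i) = ∑ i, lam i * |μ i| :=
    Finset.sum_congr rfl (fun i _ => by rw [hbf i])
  rw [e1, e2]

/-- Existence of a convex combination of active gradients summing to zero, from optimality. -/
lemma mrc_alpha (hK : 0 < K) (hn : 0 < n) (hlam : ∀ i, 0 ≤ lam i) (μs : Fin m → ℝ)
    (hgmin : ∀ μ, mrcg Φ τ lam xi μs ≤ mrcg Φ τ lam xi μ) :
    ∃ α : mrcS K n m → ℝ, (∀ s, 0 ≤ α s) ∧ (∑ s, α s) = 1 ∧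
      (∀ s, α s ≠ 0 → mrcLL Φ τ lam xi s μs = mrcg Φ τ lam xi μs) ∧
      (∀ i, ∑ s, α s * mrcbv Φ τ lam xi s i = 0) := by
  classical
  haveI : Nonempty (mrcS K n m) := mrc_S_nonempty hK
  set Act : Finset (mrcS K n m) := Finset.univ.filter
    (fun s => mrcLL Φ τ lam xi s μs = mrcg Φ τ lam xi μs) with hAct
  have h0mem : (0 : Fin m → ℝ) ∈
      convexHull ℝ ((fun s => mrcbv Φ τ lam xi s) '' (Act : Set (mrcS K n m))) := by
    by_contra h0
    have hfin : ((fun s => mrcbv Φ τ lam xi s) '' (Act : Set (mrcS K n m))).Finite :=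
      (Act.finite_toSet).image _
    obtain ⟨f, u, hfu, hu0⟩ := _root_.geometric_hahn_banach_closed_point
      (convex_convexHull ℝ _) ((hfin.isCompact_convexHull ℝ).isClosed) h0
    have hu : u < 0 := by simpa using hu0
    set v : Fin m → ℝ := fun i => f (fun j => if i = j then (1:ℝ) else 0) with hv
    have hfv : ∀ w : Fin m → ℝ, f w = ∑ i, w i * v i := by
      intro w
      conv_lhs => rw [pi_eq_sum_univ w]
      rw [map_sum]
      exact Finset.sum_congr rfl (fun i _ => by rw [ContinuousLinearMap.map_smul, smul_eq_mul])
    have hactive : ∀ s ∈ Act, ∑ i, mrcbv Φ τ lam xi s i * v i < u := by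
      intro s hs
      have h := hfu _ (subset_convexHull ℝ _ ⟨s, hs, rfl⟩)
      rwa [hfv] at h
    set Ina : Finset (mrcS K n m) := Finset.univ.filter
      (fun s => ¬ mrcLL Φ τ lam xi s μs = mrcg Φ τ lam xi μs) with hIna
    have hgap : ∀ s ∈ Ina, 0 < mrcg Φ τ lam xi μs - mrcLL Φ τ lam xi s μs := by
      intro s hs
      have hle := mrc_LL_le_g Φ τ lam xi hn hlam s μs
      have hne := (Finset.mem_filter.mp hs).2
      cases' lt_or_eq_of_le hle with h h
      · linarith
      · exact absurd h hne
    set ε : ℝ := if hI : Ina.Nonempty then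
        Ina.inf' hI (fun s => mrcg Φ τ lam xi μs - mrcLL Φ τ lam xi s μs) else 1 with hε'
    have hε : 0 < ε := by
      by_cases hI : Ina.Nonempty
      · rw [hε', dif_pos hI]
        rw [Finset.lt_inf'_iff]
        exact fun s hs => hgap s hs
      · rw [hε', dif_neg hI]; norm_num
    set Mx : ℝ := 1 + ∑ s, |∑ i, mrcbv Φ τ lam xi s i * v i| with hMx
    have hMxpos : 0 < Mx := by
      have : (0:ℝ) ≤ ∑ s, |∑ i, mrcbv Φ τ lam xi s i * v i| :=
        Finset.sum_nonneg (fun s _ => abs_nonneg _)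
      rw [hMx]; linarith
    have hMxle : ∀ s, |∑ i, mrcbv Φ τ lam xi s i * v i| ≤ Mx := by
      intro s
      have h := Finset.single_le_sum
        (f := fun s : mrcS K n m => |∑ i, mrcbv Φ τ lam xi s i * v i|)
        (fun s _ => abs_nonneg _) (Finset.mem_univ s)
      rw [hMx]; linarith
    set t : ℝ := ε / (2 * Mx) with ht'
    have ht : 0 < t := div_pos hε (by linarith)
    set μt : Fin m → ℝ := fun i => μs i + t * v i with hμt
    have hLLt : ∀ s, mrcLL Φ τ lam xi s μt
        = mrcLL Φ τ lam xi s μs + t * ∑ i, mrcbv Φ τ lam xi s i * v i := by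
      intro s
      rw [mrc_LL_affine, mrc_LL_affine]
      have he : ∑ i, mrcbv Φ τ lam xi s i * μt i
          = ∑ i, (mrcbv Φ τ lam xi s i * μs i + t * (mrcbv Φ τ lam xi s i * v i)) :=
        Finset.sum_congr rfl (fun i _ => by rw [hμt]; ring)
      rw [he, Finset.sum_add_distrib, ← Finset.mul_sum]
      ring
    clear_value v ε Mx t μt
    obtain ⟨s', hs'⟩ := mrc_exists_LL_eq Φ τ lam xi hK μt
    have hfinal : mrcg Φ τ lam xi μt < mrcg Φ τ lam xi μs := by
      rw [← hs', hLLt s']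
      by_cases hA : mrcLL Φ τ lam xi s' μs = mrcg Φ τ lam xi μs
      · have h5 := hactive s' (Finset.mem_filter.mpr ⟨Finset.mem_univ _, hA⟩)
        have h6 : t * (∑ i, mrcbv Φ τ lam xi s' i * v i) < t * u :=
          mul_lt_mul_of_pos_left h5 ht
        have h7 : t * u < 0 := mul_neg_of_pos_of_neg ht hu
        linarith
      · have hmemI : s' ∈ Ina := Finset.mem_filter.mpr ⟨Finset.mem_univ _, hA⟩
        have hIne : Ina.Nonempty := ⟨s', hmemI⟩
        have hεle : ε ≤ mrcg Φ τ lam xi μs - mrcLL Φ τ lam xi s' μs := by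
          rw [hε', dif_pos hIne]
          exact Finset.inf'_le _ hmemI
        have h8 : t * (∑ i, mrcbv Φ τ lam xi s' i * v i) ≤ t * Mx := by
          apply mul_le_mul_of_nonneg_left _ (le_of_lt ht)
          exact le_trans (le_abs_self _) (hMxle s')
        have h9 : t * Mx = ε / 2 := by
          rw [ht']
          field_simp
        linarith
    exact absurd (hgmin μt) (not_le.mpr hfinal)
  rw [mem_convexHull_iff_exists_fintype] at h0mem
  obtain ⟨ι, hι, w, z, hw0, hw1, hz, hzsum⟩ := h0mem
  have hrep : ∀ i : ι, ∃ s, s ∈ Act ∧ mrcbv Φ τ lam xi s = z i := by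
    intro i
    obtain ⟨s, hs, heq⟩ := hz i
    exact ⟨s, hs, heq⟩
  choose rep hrepA hrepE using hrep
  refine ⟨fun s => ∑ i ∈ Finset.univ.filter (fun i => rep i = s), w i, ?_, ?_, ?_, ?_⟩
  · exact fun s => Finset.sum_nonneg (fun i _ => hw0 i)
  · rw [← hw1]
    exact Finset.sum_fiberwise _ _ _
  · intro s hs
    by_contra hA
    apply hs
    show ∑ i ∈ Finset.univ.filter (fun i => rep i = s), w i = 0
    have hempty : Finset.univ.filter (fun i => rep i = s) = ∅ := by
      rw [Finset.filter_eq_empty_iff]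
      intro i _
      intro hrs
      have h := hrepA i
      rw [hrs] at h
      exact hA (Finset.mem_filter.mp h).2
    rw [hempty, Finset.sum_empty]
  · intro i0
    have e1 : ∑ s, (∑ i ∈ Finset.univ.filter (fun i => rep i = s), w i) * mrcbv Φ τ lam xi s i0
        = ∑ s, ∑ i ∈ Finset.univ.filter (fun i => rep i = s), w i * mrcbv Φ τ lam xi (rep i) i0 := by
      refine Finset.sum_congr rfl (fun s _ => ?_)
      rw [Finset.sum_mul]
      exact Finset.sum_congr rfl (fun i hi => by
        rw [(Finset.mem_filter.mp hi).2])
    rw [e1, Finset.sum_fiberwise]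
    have e2 : ∑ i : ι, w i * mrcbv Φ τ lam xi (rep i) i0 = ∑ i : ι, w i * z i i0 :=
      Finset.sum_congr rfl (fun i _ => by rw [hrepE i])
    rw [e2]
    have := congrFun hzsum i0
    simpa [Finset.sum_apply] using this

/-- Key summation identity for the constructed primal weights. -/
lemma mrc_q_sum (α : mrcS K n m → ℝ) (F : Fin n → Fin K → ℝ) :
    ∑ j, ∑ y, (∑ s : mrcS K n m, α s *
        (if y ∈ (s.1 j).1 then 1 / (n * ((s.1 j).1.card : ℝ)) else 0)) * F j y
      = ∑ s : mrcS K n m, α s * ((∑ j, (∑ y ∈ (s.1 j).1, F j y) / ((s.1 j).1.card : ℝ)) / n) := by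
  classical
  have hinner : ∀ (s : mrcS K n m) (j : Fin n),
      ∑ y, (α s * (if y ∈ (s.1 j).1 then 1 / (n * ((s.1 j).1.card : ℝ)) else 0)) * F j y
        = α s * ((∑ y ∈ (s.1 j).1, F j y) / ((s.1 j).1.card : ℝ) / n) := by
    intro s j
    calc ∑ y, (α s * (if y ∈ (s.1 j).1 then 1 / (n * ((s.1 j).1.card : ℝ)) else 0)) * F j y
        = ∑ y, (if y ∈ (s.1 j).1 then α s * (F j y / (n * ((s.1 j).1.card : ℝ))) else 0) := by
          refine Finset.sum_congr rfl (fun y _ => ?_)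
          by_cases hy : y ∈ (s.1 j).1
          · rw [if_pos hy, if_pos hy]; ring
          · rw [if_neg hy, if_neg hy]; ring
      _ = ∑ y ∈ (s.1 j).1, α s * (F j y / (n * ((s.1 j).1.card : ℝ))) := by
          rw [Finset.sum_ite_mem, Finset.univ_inter]
      _ = α s * ((∑ y ∈ (s.1 j).1, F j y) / ((s.1 j).1.card : ℝ) / n) := by
          rw [← Finset.mul_sum, ← Finset.sum_div, div_div, mul_comm ((s.1 j).1.card : ℝ) (n:ℝ)]
  calc ∑ j, ∑ y, (∑ s : mrcS K n m, α s *
        (if y ∈ (s.1 j).1 then 1 / (n * ((s.1 j).1.card : ℝ)) else 0)) * F j y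
      = ∑ j, ∑ s : mrcS K n m, ∑ y, (α s *
        (if y ∈ (s.1 j).1 then 1 / (n * ((s.1 j).1.card : ℝ)) else 0)) * F j y := by
        refine Finset.sum_congr rfl (fun j _ => ?_)
        rw [← Finset.sum_comm]
        exact Finset.sum_congr rfl (fun y _ => Finset.sum_mul _ _ _)
    _ = ∑ s : mrcS K n m, ∑ j, ∑ y, (α s *
        (if y ∈ (s.1 j).1 then 1 / (n * ((s.1 j).1.card : ℝ)) else 0)) * F j y :=
        Finset.sum_comm
    _ = ∑ s : mrcS K n m, α s * ((∑ j, (∑ y ∈ (s.1 j).1, F j y) / ((s.1 j).1.card : ℝ)) / n) := by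
        refine Finset.sum_congr rfl (fun s _ => ?_)
        rw [Finset.sum_congr rfl (fun j _ => hinner s j), ← Finset.mul_sum, ← Finset.sum_div]

/-- Strong duality: a primal feasible point whose "uniform-residual" value matches the dual. -/
lemma mrc_strong (hK : 0 < K) (hn : 0 < n) (hlam : ∀ i, 0 ≤ lam i) (μs : Fin m → ℝ)
    (hgmin : ∀ μ, mrcg Φ τ lam xi μs ≤ mrcg Φ τ lam xi μ) :
    ∃ q : Fin n → Fin K → ℝ,
      (∀ j y, 0 ≤ q j y) ∧
      (∀ j, ∑ y, q j y = 1 / n) ∧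
      (∀ i, |(∑ j, ∑ y, q j y * Φ (xi j, y) i) - τ i| ≤ lam i) ∧
      (∀ h : ↥Xs → Fin K → ℝ, (∀ x y, 0 ≤ h x y) → (∀ x, ∑ y, h x y = 1) →
        ∑ j, ∑ y, q j y * h (xi j) y ≤ 1 - mrcg Φ τ lam xi μs) := by
  classical
  obtain ⟨α, hα0, hα1, hαsupp, hαbv⟩ := mrc_alpha Φ τ lam xi hK hn hlam μs hgmin
  have hnR : (0:ℝ) < n := by exact_mod_cast hn
  have hcR : ∀ (s : mrcS K n m) (j : Fin n), (0:ℝ) < ((s.1 j).1.card : ℝ) := by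
    intro s j; exact_mod_cast (s.1 j).2.card_pos
  refine ⟨fun j y => ∑ s : mrcS K n m, α s *
      (if y ∈ (s.1 j).1 then 1 / (n * ((s.1 j).1.card : ℝ)) else 0), ?_, ?_, ?_, ?_⟩
  · intro j y
    refine Finset.sum_nonneg (fun s _ => mul_nonneg (hα0 s) ?_)
    by_cases hy : y ∈ (s.1 j).1
    · rw [if_pos hy]; positivity
    · rw [if_neg hy]
  · intro j
    rw [Finset.sum_comm]
    have he : ∀ s : mrcS K n m, ∑ y, α s *
        (if y ∈ (s.1 j).1 then 1 / (n * ((s.1 j).1.card : ℝ)) else 0) = α s * (1/n) := by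
      intro s
      rw [← Finset.mul_sum, Finset.sum_ite_mem, Finset.univ_inter, Finset.sum_const,
        nsmul_eq_mul]
      congr 1
      rw [one_div, mul_inv, ← mul_assoc, mul_comm (((s.1 j).1.card : ℝ)),
        mul_assoc, mul_inv_cancel₀ (ne_of_gt (hcR s j)), mul_one, one_div]
    rw [Finset.sum_congr rfl (fun s _ => he s), ← Finset.sum_mul, hα1, one_mul]
  · intro i
    have hmom : ∑ j, ∑ y, (∑ s : mrcS K n m, α s *
        (if y ∈ (s.1 j).1 then 1 / (n * ((s.1 j).1.card : ℝ)) else 0)) * Φ (xi j, y) i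
        = τ i - ∑ s : mrcS K n m, α s * (lam i * mrcsg (s.2 i)) := by
      rw [mrc_q_sum]
      have he2 : ∀ s : mrcS K n m,
          α s * ((∑ j, (∑ y ∈ (s.1 j).1, Φ (xi j, y) i) / ((s.1 j).1.card : ℝ)) / n)
          = α s * mrcbv Φ τ lam xi s i + τ i * α s - α s * (lam i * mrcsg (s.2 i)) := by
        intro s
        unfold mrcbv
        ring
      rw [Finset.sum_congr rfl (fun s _ => he2 s), Finset.sum_sub_distrib,
        Finset.sum_add_distrib, hαbv i, ← Finset.mul_sum, hα1, mul_one, zero_add]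
    rw [hmom]
    have : τ i - ∑ s : mrcS K n m, α s * (lam i * mrcsg (s.2 i)) - τ i
        = -(∑ s : mrcS K n m, α s * (lam i * mrcsg (s.2 i))) := by ring
    rw [this, abs_neg]
    calc |∑ s : mrcS K n m, α s * (lam i * mrcsg (s.2 i))|
        ≤ ∑ s : mrcS K n m, |α s * (lam i * mrcsg (s.2 i))| := Finset.abs_sum_le_sum_abs _ _
      _ = ∑ s : mrcS K n m, α s * lam i := by
          refine Finset.sum_congr rfl (fun s _ => ?_)
          rw [abs_mul, abs_mul, abs_of_nonneg (hα0 s), abs_of_nonneg (hlam i), mrc_sg_abs,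
            mul_one]
      _ = lam i := by rw [← Finset.sum_mul, hα1, one_mul]
  · intro h hh0 hh1
    rw [mrc_q_sum]
    have hb : ∀ s : mrcS K n m, α s * ((∑ j, (∑ y ∈ (s.1 j).1, h (xi j) y)
          / ((s.1 j).1.card : ℝ)) / n)
        ≤ α s * ((∑ j, 1 / ((s.1 j).1.card : ℝ)) / n) := by
      intro s
      refine mul_le_mul_of_nonneg_left ?_ (hα0 s)
      rw [div_eq_mul_inv, div_eq_mul_inv]
      refine mul_le_mul_of_nonneg_right ?_ (by positivity)
      refine Finset.sum_le_sum (fun j _ => ?_)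
      rw [div_eq_mul_inv, div_eq_mul_inv]
      refine mul_le_mul_of_nonneg_right ?_ (by positivity)
      calc ∑ y ∈ (s.1 j).1, h (xi j) y ≤ ∑ y, h (xi j) y :=
            Finset.sum_le_sum_of_subset_of_nonneg (Finset.subset_univ _)
              (fun y _ _ => hh0 _ y)
        _ = 1 := hh1 _
    have hval : ∑ s : mrcS K n m, α s * ((∑ j, 1 / ((s.1 j).1.card : ℝ)) / n)
        = 1 - mrcg Φ τ lam xi μs := by
      have he3 : ∀ s : mrcS K n m, α s * ((∑ j, 1 / ((s.1 j).1.card : ℝ)) / n)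
          = α s * 1 + α s * (∑ i, mrcbv Φ τ lam xi s i * μs i)
            - α s * mrcg Φ τ lam xi μs := by
        intro s
        by_cases hA : α s = 0
        · rw [hA]; ring
        · have hLg := hαsupp s hA
          have haff := mrc_LL_affine Φ τ lam xi s μs
          rw [hLg] at haff
          have : (∑ j, 1 / ((s.1 j).1.card : ℝ)) / n
              = 1 + (∑ i, mrcbv Φ τ lam xi s i * μs i) - mrcg Φ τ lam xi μs := by
            linarith
          rw [this]
          ring
      have hmid : ∑ s : mrcS K n m, α s * (∑ i, mrcbv Φ τ lam xi s i * μs i) = 0 := by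
        calc ∑ s : mrcS K n m, α s * (∑ i, mrcbv Φ τ lam xi s i * μs i)
            = ∑ s : mrcS K n m, ∑ i, α s * mrcbv Φ τ lam xi s i * μs i := by
              refine Finset.sum_congr rfl (fun s _ => ?_)
              rw [Finset.mul_sum]
              exact Finset.sum_congr rfl (fun i _ => by ring)
          _ = ∑ i, ∑ s : mrcS K n m, α s * mrcbv Φ τ lam xi s i * μs i := Finset.sum_comm
          _ = ∑ i : Fin m, (∑ s : mrcS K n m, α s * mrcbv Φ τ lam xi s i) * μs i := by
              refine Finset.sum_congr rfl (fun i _ => ?_)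
              rw [Finset.sum_mul]
          _ = 0 := by
              rw [Finset.sum_congr rfl (fun i _ => by rw [hαbv i, zero_mul])]
              exact Finset.sum_const_zero
      rw [Finset.sum_congr rfl (fun s _ => he3 s), Finset.sum_sub_distrib,
        Finset.sum_add_distrib, hmid]
      have h1' : ∑ s : mrcS K n m, α s * (1:ℝ) = 1 := by
        rw [← Finset.sum_mul, hα1, one_mul]
      have h2' : ∑ s : mrcS K n m, α s * mrcg Φ τ lam xi μs = mrcg Φ τ lam xi μs := by
        rw [← Finset.sum_mul, hα1, one_mul]
      rw [h1', h2']
      ring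
    calc ∑ s : mrcS K n m, α s * ((∑ j, (∑ y ∈ (s.1 j).1, h (xi j) y)
          / ((s.1 j).1.card : ℝ)) / n)
        ≤ ∑ s : mrcS K n m, α s * ((∑ j, 1 / ((s.1 j).1.card : ℝ)) / n) :=
          Finset.sum_le_sum (fun s _ => hb s)
      _ = 1 - mrcg Φ τ lam xi μs := hval

end LP


/-- The discrete distribution built from primal weights. -/
lemma mrc_P {d K n : ℕ} {Xs : Set (Fin d → ℝ)} (hn : 0 < n) (xi : Fin n → ↥Xs)
    (q : Fin n → Fin K → ℝ) (hq0 : ∀ j y, 0 ≤ q j y) (hqsum : ∀ j, ∑ y, q j y = 1/(n:ℝ)) :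
    ∃ P : Measure (↥Xs × Fin K), IsProbabilityMeasure P ∧
      P.map Prod.fst = (n : ℝ≥0∞)⁻¹ • ∑ j : Fin n, Measure.dirac (xi j) ∧
      ∀ f : ↥Xs × Fin K → ℝ, ∫ z, f z ∂P = ∑ j, ∑ y, q j y * f (xi j, y) := by
  classical
  have hnR : (0:ℝ) < n := by exact_mod_cast hn
  set P : Measure (↥Xs × Fin K) := ∑ z : Fin n × Fin K,
    (ENNReal.ofReal (q z.1 z.2)) • Measure.dirac ((xi z.1, z.2) : ↥Xs × Fin K) with hP
  have hofq : ∀ j, ∑ y, ENNReal.ofReal (q j y) = (n : ℝ≥0∞)⁻¹ := by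
    intro j
    rw [← ENNReal.ofReal_sum_of_nonneg (fun y _ => hq0 j y), hqsum j, one_div,
      ENNReal.ofReal_inv_of_pos hnR, ENNReal.ofReal_natCast]
  have hint : ∀ f : ↥Xs × Fin K → ℝ, ∫ z, f z ∂P = ∑ j, ∑ y, q j y * f (xi j, y) := by
    intro f
    rw [hP, mrc_integral_combo (fun z : Fin n × Fin K => q z.1 z.2)
      (fun z => hq0 z.1 z.2) (fun z : Fin n × Fin K => ((xi z.1, z.2) : ↥Xs × Fin K)) f,
      Fintype.sum_prod_type]
  have hprob : IsProbabilityMeasure P := by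
    constructor
    rw [hP, Measure.finset_sum_apply]
    have : ∀ z : Fin n × Fin K,
        ((ENNReal.ofReal (q z.1 z.2)) • Measure.dirac ((xi z.1, z.2) : ↥Xs × Fin K)) Set.univ
        = ENNReal.ofReal (q z.1 z.2) := by
      intro z
      rw [Measure.smul_apply, measure_univ, smul_eq_mul, mul_one]
    rw [Finset.sum_congr rfl (fun z _ => this z), Fintype.sum_prod_type]
    rw [Finset.sum_congr rfl (fun j _ => hofq j), Finset.sum_const, Finset.card_univ,
      Fintype.card_fin, nsmul_eq_mul]
    exact ENNReal.mul_inv_cancel (by exact_mod_cast hn.ne') (ENNReal.natCast_ne_top n)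
  have hmap : P.map Prod.fst = (n : ℝ≥0∞)⁻¹ • ∑ j : Fin n, Measure.dirac (xi j) := by
    refine Measure.ext (fun A hA => ?_)
    rw [Measure.map_apply measurable_fst hA, hP, Measure.finset_sum_apply,
      Measure.smul_apply, Measure.finset_sum_apply]
    have hstep : ∀ z : Fin n × Fin K,
        ((ENNReal.ofReal (q z.1 z.2)) • Measure.dirac ((xi z.1, z.2) : ↥Xs × Fin K))
          (Prod.fst ⁻¹' A)
        = ENNReal.ofReal (q z.1 z.2) * (A.indicator (fun _ => (1:ℝ≥0∞)) (xi z.1)) := by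
      intro z
      rw [Measure.smul_apply, Measure.dirac_apply' _ (hA.preimage measurable_fst),
        smul_eq_mul]
      congr 1
    rw [Finset.sum_congr rfl (fun z _ => hstep z), Fintype.sum_prod_type]
    have hrow : ∀ j, ∑ y : Fin K,
        ENNReal.ofReal (q j y) * (A.indicator (fun _ => (1:ℝ≥0∞)) (xi j))
        = (n : ℝ≥0∞)⁻¹ * (A.indicator (fun _ => (1:ℝ≥0∞)) (xi j)) := by
      intro j
      rw [← Finset.sum_mul, hofq j]
    rw [Finset.sum_congr rfl (fun j _ => hrow j), ← Finset.mul_sum]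
    congr 1
    exact Finset.sum_congr rfl (fun j _ => (Measure.dirac_apply' _ hA).symm)
  exact ⟨P, hprob, hmap, hint⟩


/-- Theorem 2: the rule `h^V(y|x) = (Φ(x,y)ᵀμ* − φ(μ*,x))₊` is a 0-1 minimax risk
classifier for the uncertainty set with fixed empirical instances' marginal. -/
theorem stmt_4 {d K m n : ℕ} (hK : 0 < K) (hn : 0 < n)
    (Xs : Set (Fin d → ℝ)) (hXs : MeasurableSet Xs)
    (Φ : ↥Xs × Fin K → Fin m → ℝ) (hΦmeas : ∀ i, Measurable fun z => Φ z i)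
    (B : ℝ) (hΦbdd : ∀ z i, |Φ z i| ≤ B)
    (τ lam : Fin m → ℝ)
    (xi : Fin n → ↥Xs)
    (hVne : (UncV Φ τ lam xi).Nonempty)
    (μs : Fin m → ℝ)
    (hμs : ∀ μ : Fin m → ℝ,
      1 - (∑ i, τ i * μs i) + (∑ j, phix Φ μs (xi j)) / n + ∑ i, lam i * |μs i| ≤
      1 - (∑ i, τ i * μ i) + (∑ j, phix Φ μ (xi j)) / n + ∑ i, lam i * |μ i|)
    (hV : ↥Xs → Fin K → ℝ)
    (hhV : ∀ (x : ↥Xs) (y : Fin K),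
      hV x y = max ((∑ i, Φ (x, y) i * μs i) - phix Φ μs x) 0) :
    IsRule Xs hV ∧
    sSup ((fun p => loss hV p) '' UncV Φ τ lam xi)
      = sInf {r : ℝ | ∃ h : ↥Xs → Fin K → ℝ, IsRule Xs h ∧
          r = sSup ((fun p => loss h p) '' UncV Φ τ lam xi)} := by
  classical
  have hnR : (0:ℝ) < n := by exact_mod_cast hn
  obtain ⟨p0, hp0⟩ := hVne
  obtain ⟨hp01, hp02, hp03⟩ := hp0
  have hlam : ∀ i, 0 ≤ lam i := fun i => le_trans (abs_nonneg _) (hp02 i)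
  -- hV is a rule
  have hsum1 : ∀ x, ∑ y, hV x y = 1 := by
    intro x
    calc ∑ y, hV x y = ∑ y, max ((∑ i, Φ (x, y) i * μs i) - phix Φ μs x) 0 :=
          Finset.sum_congr rfl (fun y _ => hhV x y)
      _ = 1 := mrc_waterfill hK (fun y => ∑ i, Φ (x, y) i * μs i)
  have hmeasy : ∀ y, Measurable fun x => hV x y := by
    intro y
    have he : (fun x => hV x y) = fun x => max ((∑ i, Φ (x, y) i * μs i) - phix Φ μs x) 0 :=
      funext (fun x => hhV x y)
    rw [he]
    exact ((Finset.measurable_sum _ (fun i _ =>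
      ((hΦmeas i).comp measurable_prodMk_right).mul_const _)).sub
      (mrc_phix_meas Φ hΦmeas μs)).max measurable_const
  have hrule : IsRule Xs hV :=
    ⟨fun x y => by rw [hhV]; exact le_max_right _ _, hsum1, hmeasy⟩
  -- constants
  set A := ∑ i, B * |μs i| with hA
  have hAb : ∀ z : ↥Xs × Fin K, |∑ i, Φ z i * μs i| ≤ A := by
    intro z
    calc |∑ i, Φ z i * μs i| ≤ ∑ i, |Φ z i * μs i| := Finset.abs_sum_le_sum_abs _ _
      _ ≤ A := Finset.sum_le_sum (fun i _ => by
          rw [abs_mul]; exact mul_le_mul_of_nonneg_right (hΦbdd z i) (abs_nonneg _))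
  have hA0 : 0 ≤ A := le_trans (abs_nonneg _) (hAb (xi ⟨0, hn⟩, ⟨0, hK⟩))
  have hphixbd := mrc_phix_bound hK Φ B hΦbdd μs
  have hphixmeas := mrc_phix_meas Φ hΦmeas μs
  have hf1meas : Measurable fun z : ↥Xs × Fin K => ∑ i, Φ z i * μs i :=
    Finset.measurable_sum _ (fun i _ => (hΦmeas i).mul_const _)
  have hVeq : (fun z : ↥Xs × Fin K => hV z.1 z.2)
      = fun z => max ((∑ i, Φ z i * μs i) - phix Φ μs z.1) 0 :=
    funext (fun z => hhV z.1 z.2)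
  have hgmin : ∀ μ, mrcg Φ τ lam xi μs ≤ mrcg Φ τ lam xi μ := fun μ => hμs μ
  -- weak duality
  have hW : ∀ p ∈ UncV Φ τ lam xi, loss hV p ≤ mrcg Φ τ lam xi μs := by
    intro p hp
    obtain ⟨hp1, hp2, hp3⟩ := hp
    haveI := hp1
    have hint1 : Integrable (fun z : ↥Xs × Fin K => ∑ i, Φ z i * μs i) p :=
      mrc_integrable_of_bounded hf1meas hAb
    have hint2 : Integrable (fun z : ↥Xs × Fin K => phix Φ μs z.1) p :=
      mrc_integrable_of_bounded (hphixmeas.comp measurable_fst) (fun z => hphixbd z.1)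
    have hVmeas : Measurable fun z : ↥Xs × Fin K => hV z.1 z.2 := by
      rw [hVeq]
      exact (hf1meas.sub (hphixmeas.comp measurable_fst)).max measurable_const
    have hVbd : ∀ z : ↥Xs × Fin K, |hV z.1 z.2| ≤ A + (K * A + 1) := by
      intro z
      rw [hhV z.1 z.2]
      rw [abs_of_nonneg (le_max_right _ _)]
      apply max_le
      · have h1 := hAb z
        have h2 := hphixbd z.1
        rw [abs_le] at h1 h2
        have he2 : (∑ i, Φ (z.1, z.2) i * μs i) = ∑ i, Φ z i * μs i := rfl
        rw [he2]
        linarith [h1.2, h2.1]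
      · have : (0:ℝ) ≤ (K:ℝ) * A := mul_nonneg (Nat.cast_nonneg K) hA0
        linarith
    have hinthV : Integrable (fun z : ↥Xs × Fin K => hV z.1 z.2) p :=
      mrc_integrable_of_bounded hVmeas hVbd
    have hloss : loss hV p = 1 - ∫ z, hV z.1 z.2 ∂p := by
      unfold loss
      rw [integral_sub (integrable_const 1) hinthV, integral_const, probReal_univ,
        one_smul]
    have hmono : ∫ z, ((∑ i, Φ z i * μs i) - phix Φ μs z.1) ∂p ≤ ∫ z, hV z.1 z.2 ∂p := by
      rw [hVeq]
      exact integral_mono (hint1.sub hint2) (by rw [← hVeq]; exact hinthV)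
        (fun z => le_max_left _ _)
    have hsplit : ∫ z, ((∑ i, Φ z i * μs i) - phix Φ μs z.1) ∂p
        = (∑ i, (∫ z, Φ z i ∂p) * μs i) - (∑ j, phix Φ μs (xi j)) / n := by
      rw [integral_sub hint1 hint2]
      congr 1
      · rw [integral_finset_sum _ (fun i _ => mrc_integrable_of_bounded
          ((hΦmeas i).mul_const _) (C := B * |μs i|) (fun z => by
            rw [abs_mul]; exact mul_le_mul_of_nonneg_right (hΦbdd z i) (abs_nonneg _)))]
        exact Finset.sum_congr rfl (fun i _ => integral_mul_const _ _)
      · rw [← integral_map measurable_fst.aemeasurable hphixmeas.aestronglyMeasurable,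
          hp3, mrc_integral_marg]
    have hmoment : (∑ i, τ i * μs i) - ∑ i, (∫ z, Φ z i ∂p) * μs i
        ≤ ∑ i, lam i * |μs i| := by
      rw [← Finset.sum_sub_distrib]
      refine Finset.sum_le_sum (fun i _ => ?_)
      calc τ i * μs i - (∫ z, Φ z i ∂p) * μs i = (τ i - ∫ z, Φ z i ∂p) * μs i := by ring
        _ ≤ |(τ i - ∫ z, Φ z i ∂p) * μs i| := le_abs_self _
        _ = |τ i - ∫ z, Φ z i ∂p| * |μs i| := abs_mul _ _
        _ ≤ lam i * |μs i| := mul_le_mul_of_nonneg_right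
              (by rw [abs_sub_comm]; exact hp2 i) (abs_nonneg _)
    have hgdef : mrcg Φ τ lam xi μs
        = 1 - (∑ i, τ i * μs i) + (∑ j, phix Φ μs (xi j)) / n + ∑ i, lam i * |μs i| := rfl
    rw [hloss, hgdef]
    linarith [hmono, hsplit, hmoment]
  -- strong duality
  obtain ⟨q, hq0, hqsum, hqmom, hqh⟩ := mrc_strong Φ τ lam xi hK hn hlam μs hgmin
  obtain ⟨P, hPprob, hPmap, hPint⟩ := mrc_P hn xi q hq0 hqsum
  have hPV : P ∈ UncV Φ τ lam xi := by
    refine ⟨hPprob, fun i => ?_, hPmap⟩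
    rw [hPint (fun z => Φ z i)]
    exact hqmom i
  have hqall : ∑ j, ∑ y, q j y = 1 := by
    rw [Finset.sum_congr rfl (fun j (_ : j ∈ Finset.univ) => hqsum j), Finset.sum_const,
      Finset.card_univ, Fintype.card_fin, nsmul_eq_mul]
    field_simp
  have hSt : ∀ h : ↥Xs → Fin K → ℝ, IsRule Xs h → mrcg Φ τ lam xi μs ≤ loss h P := by
    intro h hh
    obtain ⟨hh0, hh1, -⟩ := hh
    have hls : loss h P = 1 - ∑ j, ∑ y, q j y * h (xi j) y := by
      unfold loss
      have h1 := hPint (fun z => 1 - h z.1 z.2)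
      simp only at h1
      rw [h1]
      have h2 : ∑ j, ∑ y, q j y * (1 - h (xi j) y)
          = ∑ j, ∑ y, (q j y - q j y * h (xi j) y) :=
        Finset.sum_congr rfl (fun j _ => Finset.sum_congr rfl (fun y _ => by ring))
      rw [h2, Finset.sum_congr rfl (fun j (_ : j ∈ Finset.univ) => Finset.sum_sub_distrib _ _),
        Finset.sum_sub_distrib, hqall]
    rw [hls]
    have h3 := hqh h hh0 hh1
    linarith
  -- loss of any rule is at most one
  have hloss1 : ∀ h : ↥Xs → Fin K → ℝ, IsRule Xs h →
      ∀ p ∈ UncV Φ τ lam xi, loss h p ≤ 1 := by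
    intro h hh p hp
    obtain ⟨hh0, hh1, hhm⟩ := hh
    obtain ⟨hp1, -, -⟩ := hp
    haveI := hp1
    have hle1 : ∀ x y, h x y ≤ 1 := by
      intro x y
      have h1 := Finset.single_le_sum (f := fun y => h x y)
        (fun y _ => hh0 x y) (Finset.mem_univ y)
      rw [hh1 x] at h1
      exact h1
    have hmeas : Measurable fun z : ↥Xs × Fin K => h z.1 z.2 :=
      measurable_from_prod_countable_left (fun y => hhm y)
    have hint : Integrable (fun z : ↥Xs × Fin K => (1 : ℝ) - h z.1 z.2) p :=
      mrc_integrable_of_bounded (measurable_const.sub hmeas) (C := 1)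
        (fun z => by
          rw [abs_le]
          constructor
          · linarith [hle1 z.1 z.2]
          · linarith [hh0 z.1 z.2])
    unfold loss
    calc ∫ z, (1 - h z.1 z.2) ∂p ≤ ∫ _z, (1:ℝ) ∂p :=
          integral_mono hint (integrable_const 1) (fun z => by
            simp only
            linarith [hh0 z.1 z.2])
      _ = 1 := by rw [integral_const, probReal_univ, one_smul]
  -- assembly
  have hDP : loss hV P = mrcg Φ τ lam xi μs := le_antisymm (hW P hPV) (hSt hV hrule)
  have hub : ∀ r ∈ (fun p => loss hV p) '' UncV Φ τ lam xi, r ≤ mrcg Φ τ lam xi μs := by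
    rintro r ⟨p, hp, rfl⟩
    exact hW p hp
  have hsup : sSup ((fun p => loss hV p) '' UncV Φ τ lam xi) = mrcg Φ τ lam xi μs := by
    apply le_antisymm
    · exact csSup_le ⟨loss hV P, ⟨P, hPV, rfl⟩⟩ hub
    · rw [← hDP]
      exact le_csSup ⟨mrcg Φ τ lam xi μs, hub⟩ ⟨P, hPV, rfl⟩
  have hDR : mrcg Φ τ lam xi μs ∈ {r : ℝ | ∃ h : ↥Xs → Fin K → ℝ, IsRule Xs h ∧
      r = sSup ((fun p => loss h p) '' UncV Φ τ lam xi)} := ⟨hV, hrule, hsup.symm⟩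
  have hlow : ∀ r ∈ {r : ℝ | ∃ h : ↥Xs → Fin K → ℝ, IsRule Xs h ∧
      r = sSup ((fun p => loss h p) '' UncV Φ τ lam xi)}, mrcg Φ τ lam xi μs ≤ r := by
    rintro r ⟨h, hhr, rfl⟩
    refine le_trans (hSt h hhr) (le_csSup ⟨1, ?_⟩ ⟨P, hPV, rfl⟩)
    rintro r' ⟨p, hp, rfl⟩
    exact hloss1 h hhr p hp
  have hinf : sInf {r : ℝ | ∃ h : ↥Xs → Fin K → ℝ, IsRule Xs h ∧
      r = sSup ((fun p => loss h p) '' UncV Φ τ lam xi)} = mrcg Φ τ lam xi μs :=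
    le_antisymm (csInf_le ⟨mrcg Φ τ lam xi μs, hlow⟩ hDR) (le_csInf ⟨_, hDR⟩ hlow)
  exact ⟨hrule, by rw [hsup, hinf]⟩

end
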